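/- Let N = C(s + n - 4, s - 2) + 1 and let the triples of {1, ..., N} be 2-colored red/blue such that the coloring is transitive: for i₁ < i₂ < i₃ < i₄, if (i₁,i₂,i₃) and (i₂,i₃,i₄) have the same color then (i₁,i₂,i₄) and (i₁,i₃,i₄) also have that color. Then there exists a red clique of size s or a blue clique of size n. -/

import Mathlib

def IsMonoClique (χ : ℕ → ℕ → ℕ → Bool) (c : Bool) (S : Finset ℕ) : Prop :=
  ∀ i ∈ S, ∀ j ∈ S, ∀ k ∈ S, i < j → j < k → χ i j k = c

lemma clique_of_card_le_two {χ : ℕ → ℕ → ℕ → Bool} {c : Bool} {S : Finset ℕ}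
    (h : S.card ≤ 2) : IsMonoClique χ c S := by
  intro i hi j hj k hk hij hjk
  exfalso
  have hsub : ({i, j, k} : Finset ℕ) ⊆ S := by
    intro x hx
    simp only [Finset.mem_insert, Finset.mem_singleton] at hx
    rcases hx with rfl | rfl | rfl <;> assumption
  have hcard : ({i, j, k} : Finset ℕ).card = 3 := by
    rw [Finset.card_insert_of_notMem (by simp; omega),
      Finset.card_insert_of_notMem (by simp; omega), Finset.card_singleton]
  have := Finset.card_le_card hsub
  omega

lemma extend_top {X : Finset ℕ} {χ : ℕ → ℕ → ℕ → Bool}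
    (htrans : ∀ i₁ ∈ X, ∀ i₂ ∈ X, ∀ i₃ ∈ X, ∀ i₄ ∈ X,
      i₁ < i₂ → i₂ < i₃ → i₃ < i₄ → χ i₁ i₂ i₃ = χ i₂ i₃ i₄ →
      χ i₁ i₂ i₄ = χ i₁ i₂ i₃ ∧ χ i₁ i₃ i₄ = χ i₁ i₂ i₃)
    {c : Bool} {C : Finset ℕ} (hCX : C ⊆ X) (hcl : IsMonoClique χ c C)
    {p p' q : ℕ} (hp : p ∈ C) (hp' : p' ∈ C) (hp'p : p' < p)
    (hmax : ∀ b ∈ C, b ≤ p) (hmax' : ∀ b ∈ C, b ≠ p → b ≤ p')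
    (hq : q ∈ X) (hpq : p < q) (hcol : χ p' p q = c) :
    IsMonoClique χ c (insert q C) := by
  have H1 : ∀ b ∈ C, b < p → χ b p q = c := by
    intro b hb hbp
    rcases eq_or_lt_of_le (hmax' b hb (ne_of_lt hbp)) with heq | hlt
    · rw [heq]; exact hcol
    · have h3 : χ b p' p = c := hcl b hb p' hp' p hp hlt hp'p
      have := htrans b (hCX hb) p' (hCX hp') p (hCX hp) q hq hlt hp'p hpq
        (by rw [h3, hcol])
      rw [this.2, h3]
  have H2 : ∀ a ∈ C, ∀ b ∈ C, a < b → b < p → χ a b q = c := by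
    intro a ha b hb hab hbp
    have h3 : χ a b p = c := hcl a ha b hb p hp hab hbp
    have := htrans a (hCX ha) b (hCX hb) p (hCX hp) q hq hab hbp hpq
      (by rw [h3, H1 b hb hbp])
    rw [this.1, h3]
  intro i hi j hj k hk hij hjk
  have hqtop : ∀ x ∈ C, x < q := fun x hx => lt_of_le_of_lt (hmax x hx) hpq
  rcases Finset.mem_insert.mp hk with rfl | hkC
  · have hiC : i ∈ C := by
      rcases Finset.mem_insert.mp hi with rfl | h
      · omega
      · exact h
    have hjC : j ∈ C := by
      rcases Finset.mem_insert.mp hj with rfl | h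
      · omega
      · exact h
    rcases eq_or_lt_of_le (hmax j hjC) with rfl | hjp
    · exact H1 i hiC hij
    · exact H2 i hiC j hjC hij hjp
  · have hiC : i ∈ C := by
      rcases Finset.mem_insert.mp hi with rfl | h
      · exact absurd (hqtop k hkC) (by omega)
      · exact h
    have hjC : j ∈ C := by
      rcases Finset.mem_insert.mp hj with rfl | h
      · exact absurd (hqtop k hkC) (by omega)
      · exact h
    exact hcl i hiC j hjC k hkC hij hjk

lemma extend_bot {X : Finset ℕ} {χ : ℕ → ℕ → ℕ → Bool}
    (htrans : ∀ i₁ ∈ X, ∀ i₂ ∈ X, ∀ i₃ ∈ X, ∀ i₄ ∈ X,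
      i₁ < i₂ → i₂ < i₃ → i₃ < i₄ → χ i₁ i₂ i₃ = χ i₂ i₃ i₄ →
      χ i₁ i₂ i₄ = χ i₁ i₂ i₃ ∧ χ i₁ i₃ i₄ = χ i₁ i₂ i₃)
    {c : Bool} {T : Finset ℕ} (hTX : T ⊆ X) (hcl : IsMonoClique χ c T)
    {p q p' : ℕ} (hp : p ∈ T) (hq : q ∈ T) (hpq : p < q)
    (hmin : ∀ b ∈ T, p ≤ b) (hmin' : ∀ b ∈ T, b ≠ p → q ≤ b)
    (hp' : p' ∈ X) (hp'p : p' < p) (hcol : χ p' p q = c) :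
    IsMonoClique χ c (insert p' T) := by
  have H1 : ∀ k ∈ T, q < k → χ p' p k = c ∧ χ p' q k = c := by
    intro k hk hqk
    have h3 : χ p q k = c := hcl p hp q hq k hk hpq hqk
    have := htrans p' hp' p (hTX hp) q (hTX hq) k (hTX hk) hp'p hpq hqk
      (by rw [h3, hcol])
    rw [this.1, this.2, hcol]
    exact ⟨rfl, rfl⟩
  have H2 : ∀ b ∈ T, ∀ k ∈ T, q < b → b < k → χ p' b k = c := by
    intro b hb k hk hqb hbk
    have h3 : χ q b k = c := hcl q hq b hb k hk hqb hbk
    have h4 : χ p' q b = c := (H1 b hb hqb).2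
    have := htrans p' hp' q (hTX hq) b (hTX hb) k (hTX hk)
      (lt_trans hp'p hpq) hqb hbk (by rw [h4, h3])
    rw [this.2, h4]
  intro i hi j hj k hk hij hjk
  have hbot : ∀ x ∈ T, p' < x := fun x hx => lt_of_lt_of_le hp'p (hmin x hx)
  rcases Finset.mem_insert.mp hi with rfl | hiT
  · have hjT : j ∈ T := by
      rcases Finset.mem_insert.mp hj with rfl | h
      · omega
      · exact h
    have hkT : k ∈ T := by
      rcases Finset.mem_insert.mp hk with rfl | h
      · omega
      · exact h
    have hkne : k ≠ p := by
      have := hmin j hjT; omega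
    have hkq : q ≤ k := hmin' k hkT hkne
    rcases eq_or_ne j p with rfl | hjne
    · rcases eq_or_lt_of_le hkq with rfl | hqk
      · exact hcol
      · exact (H1 k hkT hqk).1
    · have hjq : q ≤ j := hmin' j hjT hjne
      rcases eq_or_lt_of_le hjq with rfl | hqj
      · exact (H1 k hkT (by omega)).2
      · exact H2 j hjT k hkT hqj hjk
  · have hjT : j ∈ T := by
      rcases Finset.mem_insert.mp hj with rfl | h
      · exact absurd (hbot i hiT) (by omega)
      · exact h
    have hkT : k ∈ T := by
      rcases Finset.mem_insert.mp hk with rfl | h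
      · exact absurd (hbot i hiT) (by omega)
      · exact h
    exact hcl i hiT j hjT k hkT hij hjk

lemma key (m : ℕ) : ∀ s n : ℕ, s + n ≤ m → 2 ≤ s → 2 ≤ n →
    ∀ (X : Finset ℕ) (χ : ℕ → ℕ → ℕ → Bool),
    (∀ i₁ ∈ X, ∀ i₂ ∈ X, ∀ i₃ ∈ X, ∀ i₄ ∈ X,
      i₁ < i₂ → i₂ < i₃ → i₃ < i₄ → χ i₁ i₂ i₃ = χ i₂ i₃ i₄ →
      χ i₁ i₂ i₄ = χ i₁ i₂ i₃ ∧ χ i₁ i₃ i₄ = χ i₁ i₂ i₃) →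
    Nat.choose (s + n - 4) (s - 2) + 1 ≤ X.card →
    ∃ S ⊆ X, (S.card = s ∧ IsMonoClique χ true S) ∨
      (S.card = n ∧ IsMonoClique χ false S) := by
  induction m using Nat.strong_induction_on with
  | _ m ih =>
  intro s n hm hs hn X χ htrans hcard
  classical
  rcases eq_or_lt_of_le hs with rfl | hs3
  · -- s = 2
    have hc2 : 2 ≤ X.card := by
      have : Nat.choose (2 + n - 4) (2 - 2) = 1 := Nat.choose_zero_right _
      omega
    obtain ⟨S, hSX, hS2⟩ := Finset.exists_subset_card_eq hc2
    exact ⟨S, hSX, Or.inl ⟨hS2, clique_of_card_le_two (by omega)⟩⟩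
  rcases eq_or_lt_of_le hn with rfl | hn3
  · -- n = 2
    have hc2 : 2 ≤ X.card := by
      have e : s + 2 - 4 = s - 2 := by omega
      rw [e, Nat.choose_self] at hcard
      omega
    obtain ⟨S, hSX, hS2⟩ := Finset.exists_subset_card_eq hc2
    exact ⟨S, hSX, Or.inr ⟨hS2, clique_of_card_le_two (by omega)⟩⟩
  -- s ≥ 3, n ≥ 3
  set E := X.filter (fun x => ∃ S ⊆ X, S.card = s - 1 ∧ IsMonoClique χ true S ∧
    x ∈ S ∧ ∀ y ∈ S, y ≤ x) with hEdef
  have hEX : E ⊆ X := Finset.filter_subset _ _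
  have htransE : ∀ (Y : Finset ℕ), Y ⊆ X →
      ∀ i₁ ∈ Y, ∀ i₂ ∈ Y, ∀ i₃ ∈ Y, ∀ i₄ ∈ Y,
      i₁ < i₂ → i₂ < i₃ → i₃ < i₄ → χ i₁ i₂ i₃ = χ i₂ i₃ i₄ →
      χ i₁ i₂ i₄ = χ i₁ i₂ i₃ ∧ χ i₁ i₃ i₄ = χ i₁ i₂ i₃ := by
    intro Y hY i₁ h1 i₂ h2 i₃ h3 i₄ h4
    exact htrans i₁ (hY h1) i₂ (hY h2) i₃ (hY h3) i₄ (hY h4)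
  rcases le_or_gt ((X \ E).card) (Nat.choose (s + n - 5) (s - 3)) with hXE | hgt
  swap
  · have hbin : Nat.choose ((s - 1) + n - 4) ((s - 1) - 2) + 1 ≤ (X \ E).card := by
      have e1 : (s - 1) + n - 4 = s + n - 5 := by omega
      have e2 : (s - 1) - 2 = s - 3 := by omega
      rw [e1, e2]; omega
    obtain ⟨S, hSX, hor⟩ := ih (m - 1) (by omega) (s - 1) n (by omega) (by omega) hn
      (X \ E) χ (htransE _ Finset.sdiff_subset) hbin
    rcases hor with ⟨hc, hcl⟩ | ⟨hc, hcl⟩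
    · exfalso
      have hne : S.Nonempty := Finset.card_pos.mp (by omega)
      have hmx := S.max'_mem hne
      have hmaxE : S.max' hne ∈ E := by
        rw [hEdef, Finset.mem_filter]
        exact ⟨(Finset.mem_sdiff.mp (hSX hmx)).1,
          S, fun y hy => (Finset.mem_sdiff.mp (hSX hy)).1, hc, hcl, hmx,
          fun y hy => S.le_max' y hy⟩
      exact (Finset.mem_sdiff.mp (hSX hmx)).2 hmaxE
    · exact ⟨S, fun y hy => (Finset.mem_sdiff.mp (hSX hy)).1, Or.inr ⟨hc, hcl⟩⟩
  have hEcard : Nat.choose (s + n - 5) (s - 2) + 1 ≤ E.card := by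
    have h2 : (X \ E).card = X.card - E.card := Finset.card_sdiff_of_subset hEX
    have h3 : E.card ≤ X.card := Finset.card_le_card hEX
    have pascal : Nat.choose (s + n - 4) (s - 2) =
        Nat.choose (s + n - 5) (s - 3) + Nat.choose (s + n - 5) (s - 2) := by
      have e1 : s + n - 4 = (s + n - 5) + 1 := by omega
      have e2 : s - 2 = (s - 3) + 1 := by omega
      rw [e1, e2, Nat.choose_succ_succ]
    omega
  have hbin2 : Nat.choose (s + (n - 1) - 4) (s - 2) + 1 ≤ E.card := by
    have e1 : s + (n - 1) - 4 = s + n - 5 := by omega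
    rw [e1]; exact hEcard
  obtain ⟨T, hTE, hor⟩ := ih (m - 1) (by omega) s (n - 1) (by omega) hs (by omega)
    E χ (htransE _ hEX) hbin2
  rcases hor with ⟨hc, hcl⟩ | ⟨hc, hcl⟩
  · exact ⟨T, hTE.trans hEX, Or.inl ⟨hc, hcl⟩⟩
  · -- T is a blue (n-1)-clique in E
    have hTne : T.Nonempty := Finset.card_pos.mp (by omega)
    set p := T.min' hTne with hpdef
    have hpT : p ∈ T := T.min'_mem hTne
    have hpE : p ∈ E := hTE hpT
    rw [hEdef, Finset.mem_filter] at hpE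
    obtain ⟨hpX, C, hCX, hCcard, hCred, hpC, hpmax⟩ := hpE
    have hCe : (C.erase p).Nonempty := by
      apply Finset.card_pos.mp
      rw [Finset.card_erase_of_mem hpC]
      omega
    set p' := (C.erase p).max' hCe with hp'def
    have hp'Ce : p' ∈ C.erase p := (C.erase p).max'_mem hCe
    have hp'C : p' ∈ C := Finset.mem_of_mem_erase hp'Ce
    have hp'p : p' < p :=
      lt_of_le_of_ne (hpmax p' hp'C) (Finset.ne_of_mem_erase hp'Ce)
    have hmax' : ∀ b ∈ C, b ≠ p → b ≤ p' := fun b hb hbp =>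
      (C.erase p).le_max' b (Finset.mem_erase.mpr ⟨hbp, hb⟩)
    have hTe : (T.erase p).Nonempty := by
      apply Finset.card_pos.mp
      rw [Finset.card_erase_of_mem hpT]
      omega
    set q := (T.erase p).min' hTe with hqdef
    have hqTe : q ∈ T.erase p := (T.erase p).min'_mem hTe
    have hqT : q ∈ T := Finset.mem_of_mem_erase hqTe
    have hpq : p < q :=
      lt_of_le_of_ne (T.min'_le q hqT) (Finset.ne_of_mem_erase hqTe).symm
    have hmin' : ∀ b ∈ T, b ≠ p → q ≤ b := fun b hb hbp =>
      (T.erase p).min'_le b (Finset.mem_erase.mpr ⟨hbp, hb⟩)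
    have hTX : T ⊆ X := hTE.trans hEX
    cases hcase : χ p' p q with
    | true =>
      refine ⟨insert q C, Finset.insert_subset (hTX hqT) hCX, Or.inl ⟨?_, ?_⟩⟩
      · rw [Finset.card_insert_of_notMem (fun hqC => by have := hpmax q hqC; omega)]
        omega
      · exact extend_top htrans hCX hCred hpC hp'C hp'p hpmax hmax'
          (hTX hqT) hpq hcase
    | false =>
      refine ⟨insert p' T, Finset.insert_subset (hCX hp'C) hTX, Or.inr ⟨?_, ?_⟩⟩
      · rw [Finset.card_insert_of_notMem (fun hp'T => by
          have := T.min'_le p' hp'T; omega)]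
        omega
      · exact extend_bot htrans hTX hcl hpT hqT hpq
          (fun b hb => T.min'_le b hb) hmin' (hCX hp'C) hp'p hcase

/-- For `N = C(s + n - 4, s - 2) + 1`, every transitive 2-coloring of the increasing
triples of `{1, ..., N}` contains a red clique of size `s` or a blue clique of size `n`. -/
theorem stmt_7 (s n : ℕ) (hs : 2 ≤ s) (hn : 2 ≤ n)
    (N : ℕ) (hN : N = Nat.choose (s + n - 4) (s - 2) + 1)
    (χ : ℕ → ℕ → ℕ → Bool)
    (htrans : ∀ i₁ i₂ i₃ i₄, 1 ≤ i₁ → i₁ < i₂ → i₂ < i₃ → i₃ < i₄ → i₄ ≤ N →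
      χ i₁ i₂ i₃ = χ i₂ i₃ i₄ →
      χ i₁ i₂ i₄ = χ i₁ i₂ i₃ ∧ χ i₁ i₃ i₄ = χ i₁ i₂ i₃) :
    ∃ S ⊆ Finset.Icc 1 N,
      (S.card = s ∧ ∀ i ∈ S, ∀ j ∈ S, ∀ k ∈ S, i < j → j < k → χ i j k = true) ∨
      (S.card = n ∧ ∀ i ∈ S, ∀ j ∈ S, ∀ k ∈ S, i < j → j < k → χ i j k = false) := by
  have htrans' : ∀ i₁ ∈ Finset.Icc 1 N, ∀ i₂ ∈ Finset.Icc 1 N, ∀ i₃ ∈ Finset.Icc 1 N,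
      ∀ i₄ ∈ Finset.Icc 1 N, i₁ < i₂ → i₂ < i₃ → i₃ < i₄ → χ i₁ i₂ i₃ = χ i₂ i₃ i₄ →
      χ i₁ i₂ i₄ = χ i₁ i₂ i₃ ∧ χ i₁ i₃ i₄ = χ i₁ i₂ i₃ := by
    intro i₁ h1 i₂ _ i₃ _ i₄ h4 ha hb hc
    rw [Finset.mem_Icc] at h1 h4
    exact htrans i₁ i₂ i₃ i₄ h1.1 ha hb hc h4.2
  have hcard : Nat.choose (s + n - 4) (s - 2) + 1 ≤ (Finset.Icc 1 N).card := by
    rw [Nat.card_Icc]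
    omega
  obtain ⟨S, hSX, hor⟩ := key (s + n) s n le_rfl hs hn (Finset.Icc 1 N) χ htrans' hcard
  exact ⟨S, hSX, hor⟩
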